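/- For every N ≥ 1, the word 0100·∏_{n=1}^{N}(rev(c_{2n+1})·rev(c_{2n+2})·rev(c_{2n+2})) is a prefix of the Fibonacci infinite word f. In other words, f = 0100·∏_{n≥1} rev(c_{2n+1}) rev(c_{2n+2})². -/
import Mathlib


/-- The finite Fibonacci words over the alphabet {0,1}: f 1 = 1, f 2 = 0,
and f n = f (n-1) ++ f (n-2) for n ≥ 3. -/
def fibWord : ℕ → List ℕ
  | 0 => []
  | 1 => [1]
  | 2 => [0]
  | n + 3 => fibWord (n + 2) ++ fibWord (n + 1)

/-- A finite word is a prefix of the Fibonacci infinite word iff it is a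
prefix of some finite Fibonacci word f m with m ≥ 2. -/
def IsFibPrefix (x : List ℕ) : Prop := ∃ m, 2 ≤ m ∧ x <+: fibWord m

/-- The central word p n: the Fibonacci word f n with its last two letters removed. -/
def centralWord (n : ℕ) : List ℕ := (fibWord n).dropLast.dropLast

/-- The lower Christoffel word c n = 0 · p n · 1, for n ≥ 3. -/
def chrisWord (n : ℕ) : List ℕ := [0] ++ centralWord n ++ [1]

lemma fib_rec (n : ℕ) : fibWord (n+3) = fibWord (n+2) ++ fibWord (n+1) := rfl

lemma dropLast2 (x : List ℕ) (a b : ℕ) : ((x ++ [a,b]).dropLast).dropLast = x := by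
  have : x ++ [a,b] = (x ++ [a]) ++ [b] := by simp
  rw [this, List.dropLast_concat, List.dropLast_concat]

lemma decomp : ∀ n, fibWord (2*n+3) = centralWord (2*n+3) ++ [0,1]
    ∧ fibWord (2*n+4) = centralWord (2*n+4) ++ [1,0] := by
  intro n
  induction n with
  | zero => exact ⟨rfl, rfl⟩
  | succ n ih =>
    obtain ⟨h1, h2⟩ := ih
    have e5 : fibWord (2*n+5) = fibWord (2*n+4) ++ fibWord (2*n+3) := fib_rec (2*n+2)
    have c5 : centralWord (2*n+5) = fibWord (2*n+4) ++ centralWord (2*n+3) := by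
      show (fibWord (2*n+5)).dropLast.dropLast = _
      rw [e5, h1, ← List.append_assoc, dropLast2]
    have f5 : fibWord (2*n+5) = centralWord (2*n+5) ++ [0,1] := by
      rw [e5, h1, c5, List.append_assoc]
    have e6 : fibWord (2*n+6) = fibWord (2*n+5) ++ fibWord (2*n+4) := fib_rec (2*n+3)
    have c6 : centralWord (2*n+6) = fibWord (2*n+5) ++ centralWord (2*n+4) := by
      show (fibWord (2*n+6)).dropLast.dropLast = _
      rw [e6, h2, ← List.append_assoc, dropLast2]
    have f6 : fibWord (2*n+6) = centralWord (2*n+6) ++ [1,0] := by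
      rw [e6, h2, c6, List.append_assoc]
    constructor
    · have : 2*(n+1)+3 = 2*n+5 := by omega
      rw [this]; exact f5
    · have : 2*(n+1)+4 = 2*n+6 := by omega
      rw [this]; exact f6

lemma cwo (n : ℕ) : centralWord (2*n+5) = fibWord (2*n+4) ++ centralWord (2*n+3) := by
  show (fibWord (2*n+5)).dropLast.dropLast = _
  rw [fib_rec (2*n+2), (decomp n).1, ← List.append_assoc, dropLast2]

lemma cwe (n : ℕ) : centralWord (2*n+6) = fibWord (2*n+5) ++ centralWord (2*n+4) := by
  show (fibWord (2*n+6)).dropLast.dropLast = _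
  rw [fib_rec (2*n+3), (decomp n).2, ← List.append_assoc, dropLast2]

lemma pod (n : ℕ) : centralWord (2*n+5) = centralWord (2*n+4) ++ [1,0] ++ centralWord (2*n+3) := by
  rw [cwo, (decomp n).2]

lemma pev (n : ℕ) : centralWord (2*n+6) = centralWord (2*n+5) ++ [0,1] ++ centralWord (2*n+4) := by
  have h5 : fibWord (2*n+5) = centralWord (2*n+5) ++ [0,1] := by
    have := (decomp (n+1)).1
    have e : 2*(n+1)+3 = 2*n+5 := by omega
    rwa [e] at this
  rw [cwe, h5]

lemma Cid : ∀ n, (centralWord (2*n+3) ++ [0,1] ++ centralWord (2*n+4)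
      = centralWord (2*n+4) ++ [1,0] ++ centralWord (2*n+3))
    ∧ (centralWord (2*n+4) ++ [1,0] ++ centralWord (2*n+5)
      = centralWord (2*n+5) ++ [0,1] ++ centralWord (2*n+4)) := by
  intro n
  induction n with
  | zero =>
    constructor
    · rfl
    · rfl
  | succ n ih =>
    obtain ⟨h1, h2⟩ := ih
    have c2 : centralWord (2*n+4) ++ [1,0] ++ centralWord (2*n+5)
        = centralWord (2*n+5) ++ [0,1] ++ centralWord (2*n+4) := h2
    -- C1 (n+1) : indices 2n+5, 2n+6
    have e1 : 2*(n+1)+3 = 2*n+5 := by omega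
    have e2 : 2*(n+1)+4 = 2*n+6 := by omega
    have e3 : 2*(n+1)+5 = 2*n+7 := by omega
    rw [e1, e2, e3]
    have g1 : centralWord (2*n+5) ++ [0,1] ++ centralWord (2*n+6)
        = centralWord (2*n+6) ++ [1,0] ++ centralWord (2*n+5) := by
      rw [pev n]
      simp only [List.append_assoc]
      rw [List.append_right_inj, List.append_right_inj]
      simpa [List.append_assoc] using h2.symm
    refine ⟨g1, ?_⟩
    -- C2 (n+1): p_{2n+6} ++ [1,0] ++ p_{2n+7} = p_{2n+7} ++ [0,1] ++ p_{2n+6}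
    have p7 : centralWord (2*n+7) = centralWord (2*n+6) ++ [1,0] ++ centralWord (2*n+5) := by
      have := pod (n+1)
      rw [e2, e1] at this
      have e4 : 2*(n+1)+5 = 2*n+7 := by omega
      rwa [e4] at this
    rw [p7]
    simp only [List.append_assoc]
    rw [List.append_right_inj, List.append_right_inj]
    simpa [List.append_assoc] using g1.symm

lemma pal : ∀ n, (centralWord (2*n+3)).reverse = centralWord (2*n+3)
    ∧ (centralWord (2*n+4)).reverse = centralWord (2*n+4) := by
  intro n
  induction n with
  | zero => exact ⟨rfl, rfl⟩
  | succ n ih =>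
    obtain ⟨h1, h2⟩ := ih
    have p5 : (centralWord (2*n+5)).reverse = centralWord (2*n+5) := by
      rw [pod n]
      simp only [List.reverse_append, List.append_assoc]
      rw [h1, h2, show ([1,0]:List ℕ).reverse = [0,1] from rfl]
      have := (Cid n).1
      simp only [List.append_assoc] at this
      rw [this]
    have p6 : (centralWord (2*n+6)).reverse = centralWord (2*n+6) := by
      rw [pev n]
      simp only [List.reverse_append, List.append_assoc]
      rw [h2, p5, show ([0,1]:List ℕ).reverse = [1,0] from rfl]
      have := (Cid n).2
      simp only [List.append_assoc] at this
      rw [this]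
    have e1 : 2*(n+1)+3 = 2*n+5 := by omega
    have e2 : 2*(n+1)+4 = 2*n+6 := by omega
    rw [e1, e2]; exact ⟨p5, p6⟩

lemma Mid (k : ℕ) : centralWord (2*k+7)
    = centralWord (2*k+5) ++ [0,1] ++ centralWord (2*k+3) ++ [0,1]
      ++ centralWord (2*k+4) ++ [0,1] ++ centralWord (2*k+4) := by
  have E : fibWord (2*k+4) ++ centralWord (2*k+3)
      = centralWord (2*k+3) ++ ([0,1] ++ centralWord (2*k+4)) := by
    rw [(decomp k).2]
    simpa [List.append_assoc] using ((Cid k).1).symm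
  have h7 : centralWord (2*k+7) = fibWord (2*k+6) ++ centralWord (2*k+5) := by
    have := cwo (k+1)
    have e1 : 2*(k+1)+5 = 2*k+7 := by omega
    have e2 : 2*(k+1)+4 = 2*k+6 := by omega
    have e3 : 2*(k+1)+3 = 2*k+5 := by omega
    rwa [e1, e2, e3] at this
  have f5 : fibWord (2*k+5) = centralWord (2*k+5) ++ [0,1] := by
    have := (decomp (k+1)).1
    have e : 2*(k+1)+3 = 2*k+5 := by omega
    rwa [e] at this
  calc centralWord (2*k+7)
      = fibWord (2*k+5) ++ (fibWord (2*k+4) ++ (fibWord (2*k+4) ++ centralWord (2*k+3))) := by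
        rw [h7, fib_rec (2*k+3), cwo k]
        simp [List.append_assoc]
    _ = fibWord (2*k+5) ++ (fibWord (2*k+4) ++ (centralWord (2*k+3) ++ ([0,1] ++ centralWord (2*k+4)))) := by
        exact congrArg _ (congrArg _ E)
    _ = fibWord (2*k+5) ++ ((fibWord (2*k+4) ++ centralWord (2*k+3)) ++ ([0,1] ++ centralWord (2*k+4))) := by
        rw [List.append_assoc]
    _ = fibWord (2*k+5) ++ ((centralWord (2*k+3) ++ ([0,1] ++ centralWord (2*k+4))) ++ ([0,1] ++ centralWord (2*k+4))) := by
        rw [E]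
    _ = centralWord (2*k+5) ++ [0,1] ++ centralWord (2*k+3) ++ [0,1]
      ++ centralWord (2*k+4) ++ [0,1] ++ centralWord (2*k+4) := by
        rw [f5]
        simp [List.append_assoc]


lemma revChris (m : ℕ) : (chrisWord m).reverse = [1] ++ (centralWord m).reverse ++ [0] := by
  simp [chrisWord]

lemma key : ∀ N, 1 ≤ N → ([0, 1, 0, 0] ++
      ((List.range N).map
        (fun i => (chrisWord (2 * (i + 1) + 1)).reverse ++
          (chrisWord (2 * (i + 1) + 2)).reverse ++
          (chrisWord (2 * (i + 1) + 2)).reverse)).flatten)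
    = centralWord (2*N+5) ++ [0] := by
  intro N hN
  induction N, hN using Nat.le_induction with
  | base => rfl
  | succ N hN ih =>
    rw [List.range_succ, List.map_append, List.flatten_append, ← List.append_assoc, ih]
    have e1 : 2 * (N + 1) + 1 = 2*N+3 := by omega
    have e2 : 2 * (N + 1) + 2 = 2*N+4 := by omega
    have e3 : 2 * (N+1) + 5 = 2*N+7 := by omega
    simp only [List.map_cons, List.map_nil, List.flatten_cons, List.flatten_nil,
      List.append_nil, e1, e2, e3, revChris, (pal N).1, (pal N).2, Mid N]
    simp [List.append_assoc]

theorem stmt15 (N : ℕ) (hN : 1 ≤ N) :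
    IsFibPrefix ([0, 1, 0, 0] ++
      ((List.range N).map
        (fun i => (chrisWord (2 * (i + 1) + 1)).reverse ++
          (chrisWord (2 * (i + 1) + 2)).reverse ++
          (chrisWord (2 * (i + 1) + 2)).reverse)).flatten) := by
  refine ⟨2*N+5, by omega, ?_⟩
  rw [key N hN]
  have f5 : fibWord (2*N+5) = centralWord (2*N+5) ++ [0,1] := by
    have := (decomp (N+1)).1
    have e : 2*(N+1)+3 = 2*N+5 := by omega
    rwa [e] at this
  rw [f5]
  exact ⟨[1], by simp⟩
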